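/- Every graph G has a spanning subforest F (an acyclic set of edges) such that removing the edges of F from G leaves a graph in which every vertex has even degree. -/

import Mathlib

private lemma degree_congr {V : Type*} [Fintype V] {G1 G2 : SimpleGraph V} (h : G1 = G2)
    (x : V) [Fintype (G1.neighborSet x)] [Fintype (G2.neighborSet x)] :
    G1.degree x = G2.degree x := by
  rw [← SimpleGraph.card_neighborFinset_eq_degree, ← SimpleGraph.card_neighborFinset_eq_degree]
  congr 1
  ext w
  simp only [SimpleGraph.mem_neighborFinset, h]

/-- Degree of a graph whose edge set is given by a duplicate-free list, at a vertex `x`,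
equals the number of edges of the list containing `x`. -/
private lemma degree_eq_countP {V : Type*} [Fintype V] [DecidableEq V] (C : SimpleGraph V)
    (l : List (Sym2 V)) (x : V) [Fintype (C.neighborSet x)]
    (hnd : l.Nodup) (hC : ∀ e, e ∈ C.edgeSet ↔ e ∈ l) :
    C.degree x = l.countP (fun e => x ∈ e) := by
  classical
  rw [← SimpleGraph.card_neighborFinset_eq_degree, List.countP_eq_length_filter,
    ← List.toFinset_card_of_nodup (hnd.filter _)]
  apply Finset.card_bij (fun w _ => s(x, w))
  · intro w hw
    rw [SimpleGraph.mem_neighborFinset] at hw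
    simp only [List.mem_toFinset, List.mem_filter, decide_eq_true_eq]
    exact ⟨(hC _).mp ((SimpleGraph.mem_edgeSet C).mpr hw), Sym2.mem_mk_left x w⟩
  · intro w hw w' hw' h
    rw [SimpleGraph.mem_neighborFinset] at hw hw'
    rcases Sym2.eq_iff.mp h with ⟨-, h2⟩ | ⟨h1, h2⟩
    · exact h2
    · exact h2.trans h1
  · intro e he
    simp only [List.mem_toFinset, List.mem_filter, decide_eq_true_eq] at he
    obtain ⟨hel, hxe⟩ := he
    refine ⟨Sym2.Mem.other hxe, ?_, Sym2.other_spec hxe⟩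
    rw [SimpleGraph.mem_neighborFinset, ← SimpleGraph.mem_edgeSet, hC,
      Sym2.other_spec hxe]
    exact hel

private lemma even_degree_of_cycle {V : Type*} [Fintype V] [DecidableEq V] {G : SimpleGraph V}
    {v : V} {c : G.Walk v v} (hc : c.IsCycle) (x : V)
    [Fintype (c.toSubgraph.spanningCoe.neighborSet x)] :
    Even (c.toSubgraph.spanningCoe.degree x) := by
  classical
  have hC : ∀ e, e ∈ c.toSubgraph.spanningCoe.edgeSet ↔ e ∈ c.edges := by
    intro e
    induction e using Sym2.ind with
    | _ a b =>
      rw [SimpleGraph.mem_edgeSet]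
      change c.toSubgraph.Adj a b ↔ _
      rw [← SimpleGraph.Subgraph.mem_edgeSet, SimpleGraph.Walk.edgeSet_toSubgraph]
      rfl
  rw [degree_eq_countP _ _ x hc.isTrail.edges_nodup hC]
  exact (hc.isTrail.even_countP_edges_iff x).mpr (fun h => absurd rfl h)

private lemma even_degree_sup {V : Type*} [Fintype V] {H C : SimpleGraph V}
    (hdisj : Disjoint H C) (x : V) [Fintype ((H ⊔ C).neighborSet x)]
    [Fintype (H.neighborSet x)] [Fintype (C.neighborSet x)]
    (h1 : Even (H.degree x)) (h2 : Even (C.degree x)) :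
    Even ((H ⊔ C).degree x) := by
  classical
  rw [← SimpleGraph.card_neighborFinset_eq_degree] at h1 h2 ⊢
  have hnb : (H ⊔ C).neighborFinset x = H.neighborFinset x ∪ C.neighborFinset x := by
    ext w
    simp [SimpleGraph.mem_neighborFinset]
  have hdnb : Disjoint (H.neighborFinset x) (C.neighborFinset x) := by
    rw [Finset.disjoint_left]
    intro w hw hw'
    rw [SimpleGraph.mem_neighborFinset] at hw hw'
    simpa using (hdisj.le_bot : H ⊓ C ≤ ⊥) ⟨hw, hw'⟩
  rw [hnb, Finset.card_union_of_disjoint hdnb]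
  exact h1.add h2

open Classical in
theorem stmt7 {V : Type*} [Fintype V] (G : SimpleGraph V) :
    ∃ F : SimpleGraph V, F ≤ G ∧ F.IsAcyclic ∧
      ∀ v : V, Even ((G \ F).degree v) := by
  classical
  set s : Finset (SimpleGraph V) :=
    Finset.univ.filter (fun H => H ≤ G ∧ ∀ v, Even (H.degree v)) with hs
  have hbot : (⊥ : SimpleGraph V) ∈ s := by
    rw [hs, Finset.mem_filter]
    refine ⟨Finset.mem_univ _, bot_le, fun v => ?_⟩
    convert (show Even (0 : ℕ) from ⟨0, rfl⟩) using 1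
    rw [← SimpleGraph.card_neighborFinset_eq_degree, Finset.card_eq_zero]
    ext w
    simp [SimpleGraph.mem_neighborFinset]
  obtain ⟨H, hHs, hmax⟩ := Finset.exists_max_image s (fun H => H.edgeSet.ncard) ⟨⊥, hbot⟩
  rw [hs, Finset.mem_filter] at hHs
  obtain ⟨-, hHG, hHeven⟩ := hHs
  refine ⟨G \ H, sdiff_le, ?_, ?_⟩
  · intro v c hc
    set C := c.toSubgraph.spanningCoe with hCdef
    have hCle : C ≤ G \ H := c.toSubgraph.spanningCoe_le
    have hdisj : Disjoint H C := disjoint_sdiff_self_right.mono_right hCle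
    have hmem : H ⊔ C ∈ s := by
      rw [hs, Finset.mem_filter]
      refine ⟨Finset.mem_univ _, sup_le hHG (hCle.trans sdiff_le), fun x => ?_⟩
      have h1 : Even (H.degree x) := hHeven x
      have h2 : Even (C.degree x) := even_degree_of_cycle hc x
      convert even_degree_sup hdisj x h1 h2 using 2
    have hne : c.edges ≠ [] := by
      intro h
      have h3 := hc.three_le_length
      rw [← SimpleGraph.Walk.length_edges, h] at h3
      simp at h3
    have hCedge : ∀ e, e ∈ C.edgeSet ↔ e ∈ c.edges := by
      intro e
      induction e using Sym2.ind with
      | _ a b =>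
        rw [SimpleGraph.mem_edgeSet]
        change c.toSubgraph.Adj a b ↔ _
        rw [← SimpleGraph.Subgraph.mem_edgeSet, SimpleGraph.Walk.edgeSet_toSubgraph]
        rfl
    have hCfin : C.edgeSet.Finite := Set.toFinite _
    have hHfin : H.edgeSet.Finite := Set.toFinite _
    have hCpos : 0 < C.edgeSet.ncard := by
      rw [Set.ncard_pos hCfin]
      exact ⟨c.edges.head hne, (hCedge _).mpr (List.head_mem hne)⟩
    have hlt : H.edgeSet.ncard < (H ⊔ C).edgeSet.ncard := by
      rw [SimpleGraph.edgeSet_sup,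
        Set.ncard_union_eq ((SimpleGraph.disjoint_edgeSet).mpr hdisj) hHfin hCfin]
      omega
    exact absurd (hmax _ hmem) (by omega)
  · intro x
    convert hHeven x using 2
    exact sdiff_sdiff_eq_self hHG
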